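/- Let T be a well-separated tree metric over Σ and let s_r denote the r-simplification. For any strings x, y ∈ Σⁿ, dtw(s_r(x), s_r(y)) ≤ dtw(x, y). Consequently, for all α, if dtw(x, y) ≤ nr/α then dtw(s_r(x), s_r(y)) ≤ nr/α. -/

import Mathlib

open scoped BigOperators

variable {α : Type*}

/-- `xb` is the expansion of `x` obtained by replacing the `i`-th letter of `x`
with `ks[i] ≥ 1` consecutive copies of itself (equivalently, by extending runs). -/
def IsExpansionWith (x : List α) (ks : List ℕ) (xb : List α) : Prop :=
  ks.length = x.length ∧ (∀ k ∈ ks, 1 ≤ k) ∧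
    xb = (x.zip ks).flatMap fun p => List.replicate p.2 p.1

/-- `xb` is an expansion of `x` (obtained by extending runs). -/
def IsExpansion (x xb : List α) : Prop := ∃ ks, IsExpansionWith x ks xb

/-- The cost of a correspondence: sum of pointwise distances. -/
def corrCost (d : α → α → ℝ) (xb yb : List α) : ℝ :=
  ((xb.zip yb).map fun p => d p.1 p.2).sum

/-- A correspondence between `x` and `y`: a pair of equal-length expansions. -/
def IsCorrespondence (x y xb yb : List α) : Prop :=
  IsExpansion x xb ∧ IsExpansion y yb ∧ xb.length = yb.length

/-- Dynamic time warping distance: minimum cost of a correspondence. -/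
noncomputable def dtw (d : α → α → ℝ) (x y : List α) : ℝ :=
  sInf {c | ∃ xb yb, IsCorrespondence x y xb yb ∧ c = corrCost d xb yb}

/-- The maximal runs of equal letters of a list. -/
def runsOf [DecidableEq α] (x : List α) : List (List α) := x.splitBy (· == ·)

/-- Number of runs. -/
def numRuns [DecidableEq α] (x : List α) : ℕ := (runsOf x).length

/-- Length of the final run. -/
def lastRunLen [DecidableEq α] (x : List α) : ℕ := ((runsOf x).getLastD []).length

/-- Length of the `i`-th run (0-indexed). -/
def runLen [DecidableEq α] (x : List α) (i : ℕ) : ℕ := ((runsOf x).getD i []).length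

/-- The letter populating the `i`-th run (0-indexed). -/
def runLetter [DecidableEq α] [Inhabited α] (x : List α) (i : ℕ) : α :=
  ((runsOf x).getD i []).headI

/-- The concatenation of the first `k` runs of `x`. -/
def firstRuns [DecidableEq α] (k : ℕ) (x : List α) : List α := ((runsOf x).take k).flatten

/-- The prefix of `y` consisting of its first `ry` runs, up through the `oy`-th
letter of the `ry`-th run (runs are 1-indexed here). -/
def runPrefix [DecidableEq α] (ry oy : ℕ) (y : List α) : List α :=
  firstRuns (ry - 1) y ++ ((runsOf y).getD (ry - 1) []).take oy

/-- The subproblem `SP(x, y, rx, ry, oy)`: the minimum cost of a correspondence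
between the first `rx` runs of `x` and the prefix of `y` ending at the `oy`-th
letter of its `ry`-th run, under the constraint that the final (`ry`-th) run of
the `y`-prefix is not extended; `⊤` if no such correspondence exists. -/
noncomputable def SP [DecidableEq α] (d : α → α → ℝ) (x y : List α) (rx ry oy : ℕ) : EReal :=
  sInf ((fun p : List α × List α => ((corrCost d p.1 p.2 : ℝ) : EReal)) ''
    {p | IsCorrespondence (firstRuns rx x) (runPrefix ry oy y) p.1 p.2 ∧
         (0 < oy → lastRunLen p.2 = oy)})

/-- Generalized edit distance over a metric with null character `nul`:
insertion/deletion of `l` costs `d nul l`, substitution of `l` by `l'` costs `d l l'`. -/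
noncomputable def ged (d : α → α → ℝ) (nul : α) : List α → List α → ℝ
  | [], [] => 0
  | [], b :: ys => d nul b + ged d nul [] ys
  | a :: xs, [] => d nul a + ged d nul xs []
  | a :: xs, b :: ys =>
      min (d a b + ged d nul xs ys)
        (min (d nul a + ged d nul xs (b :: ys)) (d nul b + ged d nul (a :: xs) ys))
  termination_by x y => x.length + y.length

/-- Simple (Hamming/Levenshtein) edit distance: unit-cost insertions, deletions
and substitutions. -/
def edH [DecidableEq α] : List α → List α → ℕ
  | [], ys => ys.length
  | xs, [] => xs.length
  | a :: xs, b :: ys =>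
      min ((if a = b then 0 else 1) + edH xs ys)
        (min (1 + edH xs (b :: ys)) (1 + edH (a :: xs) ys))
  termination_by x y => x.length + y.length

/-- Simple edit distance with only unit-cost insertions and deletions. -/
def edS [DecidableEq α] : List α → List α → ℕ
  | [], ys => ys.length
  | xs, [] => xs.length
  | a :: xs, b :: ys =>
      if a = b then
        min (edS xs ys) (min (1 + edS xs (b :: ys)) (1 + edS (a :: xs) ys))
      else
        min (1 + edS xs (b :: ys)) (1 + edS (a :: xs) ys)
  termination_by x y => x.length + y.length

/-- The padded string `p(x) = ∅ x₁ ∅ x₂ ∅ ⋯ xₙ ∅`. -/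
def pad (nul : α) (x : List α) : List α := nul :: x.flatMap fun a => [a, nul]

/-- The `r`-simplification for edit distance: remove all letters of magnitude at most `r`. -/
noncomputable def sEd [MetricSpace α] (nul : α) (r : ℝ) (x : List α) : List α :=
  x.filter fun l => decide (r < dist nul l)


/-- A well-separated tree metric: a rooted edge-weighted tree (given by a parent
function) over the alphabet `σ`, with positive edge weights that are
nonincreasing along every root-to-leaf path. `weight v` is the weight of the
edge from `v` to its parent. -/
structure WSTree (σ : Type*) where
  root : σ
  parent : σ → σ
  weight : σ → ℝ
  parent_root : parent root = root
  weight_pos : ∀ v, v ≠ root → 0 < weight v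
  weight_mono : ∀ v, v ≠ root → parent v ≠ root → weight v ≤ weight (parent v)
  to_root : ∀ v, ∃ n, parent^[n] v = root

namespace WSTree

variable {σ : Type*}

/-- The edges (identified by their lower endpoint) on the path from `u` to the root. -/
def ancEdges (T : WSTree σ) (u : σ) : Set σ :=
  {w | w ≠ T.root ∧ ∃ k, T.parent^[k] u = w}

/-- The tree-metric distance: the maximum weight of an edge on the (unique simple)
path from `u` to `v` (the edges of which form the symmetric difference of the
two root-paths), and `0` if `u = v`. -/
noncomputable def dist (T : WSTree σ) (u v : σ) : ℝ :=
  sSup (T.weight '' (symmDiff (T.ancEdges u) (T.ancEdges v)))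

/-- `a` is the `r`-simplification of the letter `l`: the highest ancestor of `l`
reachable from `l` using only edges of weight at most `r / 4`. -/
def IsSimp (T : WSTree σ) (r : ℝ) (l a : σ) : Prop :=
  (∃ k, T.parent^[k] l = a ∧ ∀ j < k, T.weight (T.parent^[j] l) ≤ r / 4) ∧
    (a = T.root ∨ r / 4 < T.weight a)

end WSTree


section Aux

variable {σ : Type*}

lemma WSTree.iterate_root (T : WSTree σ) (k : ℕ) : T.parent^[k] T.root = T.root := by
  induction k with
  | zero => rfl
  | succ k ih => rw [Function.iterate_succ_apply', ih, T.parent_root]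

lemma WSTree.ne_root_of_iterate (T : WSTree σ) {a : σ} {k : ℕ}
    (h : T.parent^[k] a ≠ T.root) : a ≠ T.root := by
  intro ha; exact h (ha ▸ T.iterate_root k)

lemma WSTree.weight_le_iterate (T : WSTree σ) (a : σ) (k : ℕ)
    (h : T.parent^[k] a ≠ T.root) : T.weight a ≤ T.weight (T.parent^[k] a) := by
  induction k with
  | zero => exact le_refl _
  | succ k ih =>
      rw [Function.iterate_succ_apply'] at h ⊢
      have hk : T.parent^[k] a ≠ T.root := by
        intro hk; rw [hk, T.parent_root] at h; exact h rfl
      exact le_trans (ih hk) (T.weight_mono _ hk h)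

lemma WSTree.mem_anc_simp {T : WSTree σ} {r : ℝ} {s : σ → σ}
    (hs : ∀ l, T.IsSimp r l (s l)) {u w : σ} (hw : w ∈ T.ancEdges (s u)) :
    w ∈ T.ancEdges u ∧ r / 4 < T.weight w := by
  obtain ⟨hwr, j, hj⟩ := hw
  obtain ⟨⟨k, hk, -⟩, hroot⟩ := hs u
  have hsu : s u ≠ T.root := by
    intro h; rw [h] at hj; exact hwr (hj ▸ T.iterate_root j)
  have hbig : r / 4 < T.weight (s u) := hroot.resolve_left hsu
  have hle : T.weight (s u) ≤ T.weight w := by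
    have := T.weight_le_iterate (s u) j (hj ▸ hwr)
    rwa [hj] at this
  refine ⟨⟨hwr, j + k, ?_⟩, lt_of_lt_of_le hbig hle⟩
  rw [Function.iterate_add_apply, hk, hj]

lemma WSTree.mem_anc_simp_of_big {T : WSTree σ} {r : ℝ} {s : σ → σ}
    (hs : ∀ l, T.IsSimp r l (s l)) {u w : σ} (hw : w ∈ T.ancEdges u)
    (hbig : r / 4 < T.weight w) : w ∈ T.ancEdges (s u) := by
  obtain ⟨hwr, m, hm⟩ := hw
  obtain ⟨⟨k, hk, hsmall⟩, -⟩ := hs u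
  by_cases hmk : m < k
  · exact absurd (hm ▸ hsmall m hmk) (not_le.mpr hbig)
  · refine ⟨hwr, m - k, ?_⟩
    rw [← hk, ← Function.iterate_add_apply, Nat.sub_add_cancel (not_lt.mp hmk), hm]

lemma WSTree.symmDiff_simp_subset {T : WSTree σ} {r : ℝ} {s : σ → σ}
    (hs : ∀ l, T.IsSimp r l (s l)) (u v : σ) :
    symmDiff (T.ancEdges (s u)) (T.ancEdges (s v)) ⊆
      symmDiff (T.ancEdges u) (T.ancEdges v) := by
  intro w hw
  rw [Set.mem_symmDiff] at hw ⊢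
  rcases hw with ⟨h1, h2⟩ | ⟨h1, h2⟩
  · obtain ⟨hu, hbig⟩ := WSTree.mem_anc_simp hs h1
    exact Or.inl ⟨hu, fun hv => h2 (WSTree.mem_anc_simp_of_big hs hv hbig)⟩
  · obtain ⟨hv, hbig⟩ := WSTree.mem_anc_simp hs h1
    exact Or.inr ⟨hv, fun hu => h2 (WSTree.mem_anc_simp_of_big hs hu hbig)⟩

lemma WSTree.dist_nonneg' [Fintype σ] (T : WSTree σ) (u v : σ) : 0 ≤ T.dist u v := by
  apply Real.sSup_nonneg
  rintro x ⟨w, hw, rfl⟩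
  have hwr : w ≠ T.root := by
    rw [Set.mem_symmDiff] at hw
    rcases hw with ⟨⟨h, -⟩, -⟩ | ⟨⟨h, -⟩, -⟩ <;> exact h
  exact (T.weight_pos w hwr).le

lemma WSTree.dist_simp_le [Fintype σ] {T : WSTree σ} {r : ℝ} {s : σ → σ}
    (hs : ∀ l, T.IsSimp r l (s l)) (u v : σ) :
    T.dist (s u) (s v) ≤ T.dist u v := by
  unfold WSTree.dist
  rcases Set.eq_empty_or_nonempty
      (T.weight '' symmDiff (T.ancEdges (s u)) (T.ancEdges (s v))) with h | h
  · rw [h, Real.sSup_empty]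
    exact WSTree.dist_nonneg' T u v
  · refine csSup_le_csSup ?_ h (Set.image_mono (WSTree.symmDiff_simp_subset hs u v))
    exact ((Set.finite_range T.weight).subset (Set.image_subset_range _ _)).bddAbove

lemma expansion_self {α : Type*} (x : List α) :
    IsExpansionWith x (List.replicate x.length 1) x := by
  refine ⟨by simp, fun k hk => by simp_all, ?_⟩
  induction x with
  | nil => rfl
  | cons a t ih => simpa [List.replicate_succ] using ih

lemma expansion_map {α β : Type*} (s : α → β) {x : List α} {ks : List ℕ} {xb : List α}
    (h : IsExpansionWith x ks xb) : IsExpansionWith (x.map s) ks (xb.map s) := by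
  obtain ⟨h1, h2, h3⟩ := h
  refine ⟨by simp [h1], h2, ?_⟩
  subst h3
  rw [List.zip_map_left, List.map_flatMap, List.flatMap_map]
  simp [Function.comp]

end Aux

/-- `dtw(s_r(x), s_r(y)) ≤ dtw(x, y)`; consequently if `dtw(x, y) ≤ nr/α` then
`dtw(s_r(x), s_r(y)) ≤ nr/α`. -/
theorem stmt9 {σ : Type*} [Fintype σ] (T : WSTree σ) (r : ℝ) (hr : 1 ≤ r)
    (s : σ → σ) (hs : ∀ l, T.IsSimp r l (s l)) (n : ℕ) (x y : List σ)
    (hx : x.length = n) (hy : y.length = n) :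
    dtw T.dist (x.map s) (y.map s) ≤ dtw T.dist x y ∧
    ∀ a : ℝ, 0 < a → dtw T.dist x y ≤ n * r / a →
      dtw T.dist (x.map s) (y.map s) ≤ n * r / a := by
  set S : Set ℝ := {c | ∃ xb yb, IsCorrespondence x y xb yb ∧ c = corrCost T.dist xb yb}
    with hS
  set S' : Set ℝ := {c | ∃ xb yb, IsCorrespondence (x.map s) (y.map s) xb yb ∧
      c = corrCost T.dist xb yb} with hS'
  have hlen : x.length = y.length := hx.trans hy.symm
  have hcost_nonneg : ∀ xb yb : List σ, 0 ≤ corrCost T.dist xb yb := by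
    intro xb yb
    apply List.sum_nonneg
    intro c hc
    obtain ⟨p, -, rfl⟩ := List.mem_map.mp hc
    exact T.dist_nonneg' _ _
  have hbdd : BddBelow S := ⟨0, by rintro c ⟨xb, yb, -, rfl⟩; exact hcost_nonneg _ _⟩
  have hbdd' : BddBelow S' := ⟨0, by rintro c ⟨xb, yb, -, rfl⟩; exact hcost_nonneg _ _⟩
  have hne : S.Nonempty := by
    refine ⟨corrCost T.dist x y, x, y, ⟨⟨_, expansion_self x⟩, ⟨_, expansion_self y⟩, hlen⟩, rfl⟩
  have hmain : dtw T.dist (x.map s) (y.map s) ≤ dtw T.dist x y := by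
    apply le_csInf hne
    rintro c ⟨xb, yb, ⟨⟨ksx, hex⟩, ⟨ksy, hey⟩, hl⟩, rfl⟩
    have hmem : corrCost T.dist (xb.map s) (yb.map s) ∈ S' := by
      exact ⟨xb.map s, yb.map s, ⟨⟨ksx, expansion_map s hex⟩, ⟨ksy, expansion_map s hey⟩,
        by simp [hl]⟩, rfl⟩
    refine le_trans (csInf_le hbdd' hmem) ?_
    unfold corrCost
    rw [List.zip_map]
    rw [List.map_map]
    apply List.sum_le_sum
    rintro ⟨a, b⟩ hp
    exact WSTree.dist_simp_le hs a b
  exact ⟨hmain, fun a _ h => le_trans hmain h⟩
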